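/- Under hypothesis (H), fix a geodesic ray γ from o and c ∈ ℕ. There exists a constant β < ∞, depending only on ε, η and c, such that for every z ∈ S and every y ∈ S with d(y, π(y)) ≤ c: G(z,y) ≤ β · G(o,y) · K(z), where K(z) = G(z,π(z))/G(o,π(z)) is the Martin kernel along γ. -/

import Mathlib

open scoped Classical

noncomputable section

/-- The `n`-step transition probabilities of the nearest-neighbour walk with
one-step transition probabilities `p`. -/
def pn {S : Type*} (p : S → S → ℝ) : ℕ → S → S → ℝ
  | 0, x, y => if x = y then 1 else 0
  | n + 1, x, y => ∑' z, p x z * pn p n z y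

/-- The Green function `G(x,y) = ∑_n p_n(x,y)`. -/
def green {S : Type*} (p : S → S → ℝ) (x y : S) : ℝ := ∑' n, pn p n x y

namespace TreeGreen


variable {S : Type*} {G : SimpleGraph S}

lemma getVert_nil {u : S} (n : ℕ) : (SimpleGraph.Walk.nil : G.Walk u u).getVert n = u := rfl

/-- distances along a walk -/
lemma dist_getVert_le (hconn : G.Connected) {x y : S} (W : G.Walk x y) :
    ∀ s t : ℕ, s ≤ t → G.dist (W.getVert s) (W.getVert t) + s ≤ t := by
  induction W with
  | nil => intro s t hst; simp [getVert_nil, SimpleGraph.dist_self]; omega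
  | @cons u v y h q ih =>
    intro s t hst
    match s, t with
    | 0, 0 => simp
    | 0, (t+1) =>
      have h1 : G.dist u v = 1 := SimpleGraph.dist_eq_one_iff_adj.mpr h
      have h2 := ih 0 t (Nat.zero_le t)
      have h3 := hconn.dist_triangle (u := u) (v := v) (w := q.getVert t)
      simp only [SimpleGraph.Walk.getVert_cons_succ]
      have : (SimpleGraph.Walk.cons h q).getVert 0 = u := rfl
      rw [this]
      simp only [SimpleGraph.Walk.getVert_zero] at h2
      omega
    | (s+1), (t+1) =>
      have := ih s t (by omega)
      simp only [SimpleGraph.Walk.getVert_cons_succ]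
      omega

/-- positions along a geodesic walk -/
lemma geodesic_getVert (hconn : G.Connected) {x y : S} (W : G.Walk x y)
    (hW : W.length = G.dist x y) {s t : ℕ} (hst : s ≤ t) (ht : t ≤ W.length) :
    G.dist (W.getVert s) (W.getVert t) + s = t := by
  have h0s := dist_getVert_le hconn W 0 s (Nat.zero_le s)
  have h0t := dist_getVert_le hconn W 0 t (Nat.zero_le t)
  have hst' := dist_getVert_le hconn W s t hst
  have hty := dist_getVert_le hconn W t W.length ht
  simp only [SimpleGraph.Walk.getVert_zero, SimpleGraph.Walk.getVert_length] at h0s h0t hty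
  have htri : G.dist x y ≤ G.dist x (W.getVert t) + G.dist (W.getVert t) y :=
    hconn.dist_triangle
  have htri2 : G.dist x (W.getVert t) ≤ G.dist x (W.getVert s) + G.dist (W.getVert s) (W.getVert t) :=
    hconn.dist_triangle
  omega

lemma geodesic_isPath (hconn : G.Connected) {x y : S} (W : G.Walk x y)
    (hW : W.length = G.dist x y) : W.IsPath := by
  induction W with
  | nil => exact SimpleGraph.Walk.IsPath.nil
  | @cons u v y h q ih =>
    have hlen : q.length + 1 = G.dist u y := by simpa using hW
    have hq : q.length = G.dist v y := by
      have h1 : G.dist v y ≤ q.length := SimpleGraph.dist_le q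
      have h2 : G.dist u y ≤ G.dist u v + G.dist v y := hconn.dist_triangle
      have h3 : G.dist u v = 1 := SimpleGraph.dist_eq_one_iff_adj.mpr h
      omega
    have hqpath := ih hq
    refine hqpath.cons ?_
    intro hu
    have hd := SimpleGraph.dist_le (q.dropUntil u hu)
    have hl := SimpleGraph.Walk.length_dropUntil_le q hu
    omega

lemma geodesic_unique (hconn : G.Connected) (hacyc : G.IsAcyclic) {x y : S}
    (W W' : G.Walk x y) (hW : W.length = G.dist x y) (hW' : W'.length = G.dist x y) :
    W = W' := by
  have h1 := geodesic_isPath hconn W hW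
  have h2 := geodesic_isPath hconn W' hW'
  have := SimpleGraph.isAcyclic_iff_path_unique.mp hacyc ⟨W, h1⟩ ⟨W', h2⟩
  exact congrArg Subtype.val this

lemma between_getVert (hconn : G.Connected) (hacyc : G.IsAcyclic) {x y a : S}
    (ha : G.dist x a + G.dist a y = G.dist x y)
    (W : G.Walk x y) (hW : W.length = G.dist x y) :
    W.getVert (G.dist x a) = a := by
  obtain ⟨Wa, hWa⟩ := hconn.exists_walk_length_eq_dist x a
  obtain ⟨Wb, hWb⟩ := hconn.exists_walk_length_eq_dist a y
  have hlen : (Wa.append Wb).length = G.dist x y := by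
    rw [SimpleGraph.Walk.length_append, hWa, hWb, ha]
  have hEq := geodesic_unique hconn hacyc W (Wa.append Wb) hW hlen
  rw [hEq, SimpleGraph.Walk.getVert_append]
  rw [hWa]
  simp

/-- two points between x and y are ordered -/
lemma between_ord (hconn : G.Connected) (hacyc : G.IsAcyclic) {x y a b : S}
    (ha : G.dist x a + G.dist a y = G.dist x y)
    (hb : G.dist x b + G.dist b y = G.dist x y)
    (hab : G.dist x a ≤ G.dist x b) :
    G.dist a b + G.dist x a = G.dist x b := by
  obtain ⟨W, hW⟩ := hconn.exists_walk_length_eq_dist x y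
  have hga := between_getVert hconn hacyc ha W hW
  have hgb := between_getVert hconn hacyc hb W hW
  have := geodesic_getVert hconn W hW hab (by omega)
  rw [hga, hgb] at this
  omega

lemma adj_dist_cases (hconn : G.Connected) (hacyc : G.IsAcyclic) {a b : S}
    (h : G.Adj a b) (c : S) :
    G.dist a c = G.dist b c + 1 ∨ G.dist b c = G.dist a c + 1 := by
  have hab : G.dist a b = 1 := SimpleGraph.dist_eq_one_iff_adj.mpr h
  have hba : G.dist b a = 1 := SimpleGraph.dist_eq_one_iff_adj.mpr h.symm
  have t1 : G.dist a c ≤ G.dist a b + G.dist b c := hconn.dist_triangle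
  have t2 : G.dist b c ≤ G.dist b a + G.dist a c := hconn.dist_triangle
  have hne : G.dist a c ≠ G.dist b c := by
    intro heq
    by_cases hd0 : G.dist b c = 0
    · have hbc : b = c := hconn.dist_eq_zero_iff.mp hd0
      have hac : a = c := hconn.dist_eq_zero_iff.mp (heq.trans hd0)
      exact h.ne (hac.trans hbc.symm)
    · obtain ⟨Q, hQ⟩ := hconn.exists_walk_length_eq_dist b c
      by_cases haQ : a ∈ Q.support
      · have hsplit := congrArg SimpleGraph.Walk.length (Q.take_spec haQ)
        rw [SimpleGraph.Walk.length_append] at hsplit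
        have h1 : G.dist b a ≤ (Q.takeUntil a haQ).length :=
          SimpleGraph.dist_le _
        have h2 : G.dist a c ≤ (Q.dropUntil a haQ).length :=
          SimpleGraph.dist_le _
        omega
      · have hQpath := geodesic_isPath hconn Q hQ
        have hCpath : (Q.cons h).IsPath := hQpath.cons haQ
        obtain ⟨Wa, hWa⟩ := hconn.exists_walk_length_eq_dist a c
        have hWapath := geodesic_isPath hconn Wa hWa
        have := SimpleGraph.isAcyclic_iff_path_unique.mp hacyc ⟨Q.cons h, hCpath⟩ ⟨Wa, hWapath⟩
        have hlen : (Q.cons h).length = Wa.length := by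
          have h' := congrArg (fun P : G.Path a c => P.val.length) this
          simpa using h'
        rw [SimpleGraph.Walk.length_cons, hQ, hWa, heq] at hlen
        omega
  omega

lemma unique_closer (hconn : G.Connected) (hacyc : G.IsAcyclic) {x y a b : S}
    (ha : G.Adj x a) (hb : G.Adj x b)
    (hda : G.dist a y + 1 = G.dist x y) (hdb : G.dist b y + 1 = G.dist x y) :
    a = b := by
  obtain ⟨Wa, hWa⟩ := hconn.exists_walk_length_eq_dist a y
  obtain ⟨Wb, hWb⟩ := hconn.exists_walk_length_eq_dist b y
  have hCa : (Wa.cons ha).length = G.dist x y := by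
    rw [SimpleGraph.Walk.length_cons, hWa, hda]
  have hCb : (Wb.cons hb).length = G.dist x y := by
    rw [SimpleGraph.Walk.length_cons, hWb, hdb]
  have hEq := geodesic_unique hconn hacyc (Wa.cons ha) (Wb.cons hb) hCa hCb
  have : (Wa.cons ha).getVert 1 = (Wb.cons hb).getVert 1 := by rw [hEq]
  simpa [SimpleGraph.Walk.getVert_cons_succ] using this

lemma exists_closer (hconn : G.Connected) {x y : S} (hxy : x ≠ y) :
    ∃ z, G.Adj x z ∧ G.dist z y + 1 = G.dist x y := by
  obtain ⟨W, hW⟩ := hconn.exists_walk_length_eq_dist x y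
  have hpos : 0 < G.dist x y := hconn.pos_dist_of_ne hxy
  cases W with
  | nil => simp at hW; rw [SimpleGraph.dist_self] at hpos; omega
  | @cons _ v _ h q =>
    refine ⟨v, h, ?_⟩
    have h1 : G.dist v y ≤ q.length := SimpleGraph.dist_le q
    have h2 : G.dist x y ≤ G.dist x v + G.dist v y := hconn.dist_triangle
    have h3 : G.dist x v = 1 := SimpleGraph.dist_eq_one_iff_adj.mpr h
    simp only [SimpleGraph.Walk.length_cons] at hW
    omega

/-- separation is stable under one step -/
lemma btw_step (hconn : G.Connected) (hacyc : G.IsAcyclic) {x y w z : S}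
    (hw : G.dist x w + G.dist w y = G.dist x y) (hxw : x ≠ w) (hadj : G.Adj x z) :
    G.dist z w + G.dist w y = G.dist z y := by
  rcases adj_dist_cases hconn hacyc hadj y with hcase | hcase
  · -- dist x y = dist z y + 1 : z is the closer neighbour
    have hxy : x ≠ y := by
      intro h; subst h
      simp [SimpleGraph.dist_self] at hcase
    obtain ⟨W, hW⟩ := hconn.exists_walk_length_eq_dist x y
    have hposw : 0 < G.dist x w := hconn.pos_dist_of_ne hxw
    have hgw := between_getVert hconn hacyc hw W hW
    have hpos : 0 < G.dist x y := hconn.pos_dist_of_ne hxy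
    have hadj0 : G.Adj (W.getVert 0) (W.getVert 1) :=
      W.adj_getVert_succ (by omega)
    rw [SimpleGraph.Walk.getVert_zero] at hadj0
    have h1y : G.dist (W.getVert 1) y + 1 = G.dist x y := by
      have := geodesic_getVert hconn W hW (s := 1) (t := W.length) (by omega) le_rfl
      rw [SimpleGraph.Walk.getVert_length] at this
      have h0 := geodesic_getVert hconn W hW (s := 0) (t := W.length) (by omega) le_rfl
      omega
    have hz1 : z = W.getVert 1 := unique_closer hconn hacyc hadj hadj0 (by omega) h1y
    have h1w : G.dist (W.getVert 1) (W.getVert (G.dist x w)) + 1 = G.dist x w := by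
      have := geodesic_getVert hconn W hW (s := 1) (t := G.dist x w) (by omega) (by omega)
      omega
    rw [hgw] at h1w
    rw [hz1]
    omega
  · -- z is farther
    have t1 : G.dist z y ≤ G.dist z w + G.dist w y := hconn.dist_triangle
    have t2 : G.dist z w ≤ G.dist z x + G.dist x w := hconn.dist_triangle
    have t3 : G.dist x w ≤ G.dist x z + G.dist z w := hconn.dist_triangle
    have hz : G.dist z x = 1 := SimpleGraph.dist_eq_one_iff_adj.mpr hadj.symm
    have hz' : G.dist x z = 1 := SimpleGraph.dist_eq_one_iff_adj.mpr hadj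
    omega


/-- median point of a triple in a tree -/
lemma median (hconn : G.Connected) (hacyc : G.IsAcyclic) (x y z : S) :
    ∃ u : S, (G.dist x u + G.dist u y = G.dist x y) ∧
      (G.dist x u + G.dist u z = G.dist x z) ∧
      (G.dist y u + G.dist u z = G.dist y z) := by
  classical
  obtain ⟨W, hW⟩ := hconn.exists_walk_length_eq_dist x y
  set L := W.length with hL
  set g : ℕ → ℕ := fun s => G.dist (W.getVert s) z with hg
  have hstep : ∀ s, s < L → g (s+1) = g s + 1 ∨ g s = g (s+1) + 1 := by
    intro s hs
    have hadj := W.adj_getVert_succ hs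
    rcases adj_dist_cases hconn hacyc hadj z with h | h
    · right; exact h
    · left; exact h
  have hPex : ∃ s, s = L ∨ g (s+1) = g s + 1 := ⟨L, Or.inl rfl⟩
  set t := Nat.find hPex with htdef
  have htP := Nat.find_spec hPex
  have htmin : ∀ s, s < t → ¬(s = L ∨ g (s+1) = g s + 1) :=
    fun s hs => Nat.find_min hPex hs
  have htL : t ≤ L := by
    by_contra hc
    exact (htmin L (by omega)) (Or.inl rfl)
  have hA : ∀ s, s ≤ t → g s + s = g 0 := by
    intro s hs
    induction s with
    | zero => rfl
    | succ n ih =>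
      have hn : n < t := by omega
      have h1 := htmin n hn
      push_neg at h1
      have hnL : n < L := by omega
      rcases hstep n hnL with h | h
      · exact absurd h h1.2
      · have := ih (by omega); omega
  have hC : ∀ s, t ≤ s → s < L → g (s+1) = g s + 1 := by
    intro s
    induction s using Nat.strong_induction_on with
    | _ s ih =>
      intro hts hsL
      by_cases hst : s = t
      · subst hst
        rcases htP with h' | h'
        · omega
        · exact h'
      · have hs1 : t ≤ s - 1 := by omega
        have hprev := ih (s-1) (by omega) hs1 (by omega)
        have hs1' : s - 1 + 1 = s := by omega
        rw [hs1'] at hprev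
        rcases hstep s hsL with h | h
        · exact h
        · exfalso
          have hadj1 : G.Adj (W.getVert s) (W.getVert (s-1)) := by
            have := W.adj_getVert_succ (i := s - 1) (by omega)
            rw [hs1'] at this
            exact this.symm
          have hadj2 : G.Adj (W.getVert s) (W.getVert (s+1)) :=
            W.adj_getVert_succ hsL
          have hda : G.dist (W.getVert (s-1)) z + 1 = G.dist (W.getVert s) z := by
            have : g (s-1) + 1 = g s := by omega
            exact this
          have hdb : G.dist (W.getVert (s+1)) z + 1 = G.dist (W.getVert s) z := by
            have : g (s+1) + 1 = g s := by omega
            exact this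
          have heq := unique_closer hconn hacyc hadj1 hadj2 hda hdb
          have hd2 := geodesic_getVert hconn W hW (s := s-1) (t := s+1)
            (by omega) (by omega)
          rw [heq] at hd2
          rw [SimpleGraph.dist_self] at hd2
          omega
  have hB : ∀ d, t + d ≤ L → g (t + d) = g t + d := by
    intro d
    induction d with
    | zero => intro _; simp
    | succ n ih =>
      intro hle
      have hprev := ih (by omega)
      have h2 := hC (t + n) (by omega) (by omega)
      show g (t + n + 1) = g t + (n + 1)
      omega
  refine ⟨W.getVert t, ?_, ?_, ?_⟩
  · have h1 := geodesic_getVert hconn W hW (s := 0) (t := t) (by omega) htL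
    have h2 := geodesic_getVert hconn W hW (s := t) (t := L) htL le_rfl
    rw [SimpleGraph.Walk.getVert_zero] at h1
    rw [SimpleGraph.Walk.getVert_length] at h2
    omega
  · have h1 := geodesic_getVert hconn W hW (s := 0) (t := t) (by omega) htL
    rw [SimpleGraph.Walk.getVert_zero] at h1
    have h2 := hA t le_rfl
    have hg0 : g 0 = G.dist x z := by
      show G.dist (W.getVert 0) z = G.dist x z
      rw [SimpleGraph.Walk.getVert_zero]
    have hgt : g t = G.dist (W.getVert t) z := rfl
    omega
  · have h2 := geodesic_getVert hconn W hW (s := t) (t := L) htL le_rfl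
    rw [SimpleGraph.Walk.getVert_length] at h2
    have h3 := hB (L - t) (by omega)
    have hgL : g L = G.dist y z := by
      show G.dist (W.getVert L) z = G.dist y z
      rw [SimpleGraph.Walk.getVert_length]
    have hgt : g t = G.dist (W.getVert t) z := rfl
    have hcomm : G.dist y (W.getVert t) = G.dist (W.getVert t) y :=
      SimpleGraph.dist_comm
    have ht' : t + (L - t) = L := by omega
    rw [ht'] at h3
    omega

section Ray

variable {γ : ℕ → S}

lemma gamma_dist (hγ : ∀ m n : ℕ, (G.dist (γ m) (γ n) : ℤ) = |(m : ℤ) - (n : ℤ)|)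
    {m n : ℕ} (hmn : m ≤ n) : G.dist (γ m) (γ n) = n - m := by
  have h := hγ m n
  have habs : |(m : ℤ) - (n : ℤ)| = ((n - m : ℕ) : ℤ) := by
    rw [abs_sub_comm, abs_of_nonneg (by push_cast; omega)]
    push_cast
    omega
  rw [habs] at h
  exact_mod_cast h

lemma gamma_adj (hγ : ∀ m n : ℕ, (G.dist (γ m) (γ n) : ℤ) = |(m : ℤ) - (n : ℤ)|)
    (n : ℕ) : G.Adj (γ n) (γ (n+1)) := by
  have h := gamma_dist hγ (show n ≤ n + 1 by omega)
  exact SimpleGraph.dist_eq_one_iff_adj.mp (by omega)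

lemma gamma_ne (hγ : ∀ m n : ℕ, (G.dist (γ m) (γ n) : ℤ) = |(m : ℤ) - (n : ℤ)|)
    {m n : ℕ} (h : m < n) : γ m ≠ γ n := by
  intro heq
  have := gamma_dist hγ h.le
  rw [heq, SimpleGraph.dist_self] at this
  omega

lemma proj_dist_up (hconn : G.Connected) (hacyc : G.IsAcyclic) (hγ : ∀ m n : ℕ, (G.dist (γ m) (γ n) : ℤ) = |(m : ℤ) - (n : ℤ)|)
    {x : S} {j : ℕ} (hmin : ∀ n, G.dist x (γ j) ≤ G.dist x (γ n)) :
    ∀ d, G.dist x (γ (j + d)) = G.dist x (γ j) + d := by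
  intro d
  induction d using Nat.strong_induction_on with
  | _ d ih =>
    match d with
    | 0 => simp
    | 1 =>
      rcases adj_dist_cases hconn hacyc (gamma_adj hγ j) x with h | h
      · -- dist (γ j) x = dist (γ (j+1)) x + 1 : descent, contra hmin
        have hm := hmin (j + 1)
        rw [SimpleGraph.dist_comm (u := γ j), SimpleGraph.dist_comm (u := γ (j+1))] at h
        omega
      · rw [SimpleGraph.dist_comm (u := γ j), SimpleGraph.dist_comm (u := γ (j+1))] at h
        omega
    | (d+2) =>
      have h1 := ih (d+1) (by omega)
      have h0 := ih d (by omega)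
      rcases adj_dist_cases hconn hacyc (gamma_adj hγ (j + (d+1))) x with h | h
      · -- descent  : γ (j+d) and γ (j+d+2) both closer nbrs of γ (j+d+1)
        exfalso
        rw [SimpleGraph.dist_comm (u := γ (j+(d+1))), SimpleGraph.dist_comm (u := γ (j+(d+1)+1))] at h
        have e1 : j + (d+1) + 1 = j + (d+2) := by omega
        rw [e1] at h
        have hadj1 : G.Adj (γ (j+(d+1))) (γ (j+d)) := by
          have := gamma_adj hγ (j+d)
          have e : j + d + 1 = j + (d+1) := by omega
          rw [e] at this
          exact this.symm
        have hadj2 : G.Adj (γ (j+(d+1))) (γ (j+(d+2))) := by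
          have := gamma_adj hγ (j+(d+1))
          have e : j + (d+1) + 1 = j + (d+2) := by omega
          rw [e] at this
          exact this
        have hda : G.dist (γ (j+d)) x + 1 = G.dist (γ (j+(d+1))) x := by
          rw [SimpleGraph.dist_comm (u := γ (j+d)), SimpleGraph.dist_comm (u := γ (j+(d+1)))]
          omega
        have hdb : G.dist (γ (j+(d+2))) x + 1 = G.dist (γ (j+(d+1))) x := by
          rw [SimpleGraph.dist_comm (u := γ (j+(d+2))), SimpleGraph.dist_comm (u := γ (j+(d+1)))]
          omega
        have := unique_closer hconn hacyc hadj1 hadj2 hda hdb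
        exact gamma_ne hγ (by omega : j + d < j + (d+2)) this
      · rw [SimpleGraph.dist_comm (u := γ (j+(d+1))), SimpleGraph.dist_comm (u := γ (j+(d+1)+1))] at h
        have e1 : j + (d+1) + 1 = j + (d+2) := by omega
        rw [e1] at h
        omega

lemma proj_dist_down (hconn : G.Connected) (hacyc : G.IsAcyclic) (hγ : ∀ m n : ℕ, (G.dist (γ m) (γ n) : ℤ) = |(m : ℤ) - (n : ℤ)|)
    {x : S} {j : ℕ} (hmin : ∀ n, G.dist x (γ j) ≤ G.dist x (γ n)) :
    ∀ d, d ≤ j → G.dist x (γ (j - d)) = G.dist x (γ j) + d := by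
  intro d
  induction d using Nat.strong_induction_on with
  | _ d ih =>
    match d with
    | 0 => simp
    | 1 =>
      intro hdj
      have hadj : G.Adj (γ (j-1)) (γ j) := by
        have := gamma_adj hγ (j-1)
        have e : j - 1 + 1 = j := by omega
        rw [e] at this
        exact this
      rcases adj_dist_cases hconn hacyc hadj x with h | h
      · rw [SimpleGraph.dist_comm (u := γ (j-1)), SimpleGraph.dist_comm (u := γ j)] at h
        omega
      · exfalso
        have hm := hmin (j - 1)
        rw [SimpleGraph.dist_comm (u := γ (j-1)), SimpleGraph.dist_comm (u := γ j)] at h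
        omega
    | (d+2) =>
      intro hdj
      have h1 := ih (d+1) (by omega) (by omega)
      have h0 := ih d (by omega) (by omega)
      have hadj : G.Adj (γ (j-(d+2))) (γ (j-(d+1))) := by
        have := gamma_adj hγ (j-(d+2))
        have e : j - (d+2) + 1 = j - (d+1) := by omega
        rw [e] at this
        exact this
      rcases adj_dist_cases hconn hacyc hadj x with h | h
      · rw [SimpleGraph.dist_comm (u := γ (j-(d+2))), SimpleGraph.dist_comm (u := γ (j-(d+1)))] at h
        omega
      · exfalso
        rw [SimpleGraph.dist_comm (u := γ (j-(d+2))), SimpleGraph.dist_comm (u := γ (j-(d+1)))] at h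
        have hadj2 : G.Adj (γ (j-(d+1))) (γ (j-d)) := by
          have := gamma_adj hγ (j-(d+1))
          have e : j - (d+1) + 1 = j - d := by omega
          rw [e] at this
          exact this
        have hda : G.dist (γ (j-(d+2))) x + 1 = G.dist (γ (j-(d+1))) x := by
          rw [SimpleGraph.dist_comm (u := γ (j-(d+2))), SimpleGraph.dist_comm (u := γ (j-(d+1)))]
          omega
        have hdb : G.dist (γ (j-d)) x + 1 = G.dist (γ (j-(d+1))) x := by
          rw [SimpleGraph.dist_comm (u := γ (j-d)), SimpleGraph.dist_comm (u := γ (j-(d+1)))]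
          omega
        have := unique_closer hconn hacyc hadj.symm hadj2 hda hdb
        exact gamma_ne hγ (by omega : j - (d+2) < j - d) this

end Ray


end TreeGreen

namespace TreeGreen

/-- first passage probabilities -/
def fp {S : Type*} (p : S → S → ℝ) : ℕ → S → S → ℝ
  | 0, x, w => if x = w then 1 else 0
  | n + 1, x, w => if x = w then 0 else ∑' z, p x z * fp p n z w

variable {S : Type*} {G : SimpleGraph S} [∀ x : S, Fintype (G.neighborSet x)]
variable {p : S → S → ℝ}

section basic

variable (hp_nonneg : ∀ x y, 0 ≤ p x y)
    (hp_supp : ∀ x z, z ∉ G.neighborFinset x → p x z = 0)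

include hp_supp in
lemma pn_succ_sum (n : ℕ) (x y : S) :
    pn p (n+1) x y = ∑ z ∈ G.neighborFinset x, p x z * pn p n z y := by
  show (∑' z, p x z * pn p n z y) = _
  exact tsum_eq_sum (fun z hz => by rw [hp_supp x z hz, zero_mul])

include hp_nonneg in
lemma pn_nonneg (n : ℕ) (x y : S) : 0 ≤ pn p n x y := by
  induction n generalizing x y with
  | zero => show (0:ℝ) ≤ if x = y then 1 else 0; split <;> norm_num
  | succ n ih =>
    show (0:ℝ) ≤ ∑' z, p x z * pn p n z y
    exact tsum_nonneg fun z => mul_nonneg (hp_nonneg x z) (ih z y)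

include hp_supp in
lemma fp_succ_sum (n : ℕ) {x w : S} (hxw : x ≠ w) :
    fp p (n+1) x w = ∑ z ∈ G.neighborFinset x, p x z * fp p n z w := by
  show (if x = w then 0 else ∑' z, p x z * fp p n z w) = _
  rw [if_neg hxw]
  exact tsum_eq_sum (fun z hz => by rw [hp_supp x z hz, zero_mul])

include hp_nonneg in
lemma fp_nonneg (n : ℕ) (x w : S) : 0 ≤ fp p n x w := by
  induction n generalizing x w with
  | zero => show (0:ℝ) ≤ if x = w then 1 else 0; split <;> norm_num
  | succ n ih =>
    show (0:ℝ) ≤ if x = w then 0 else ∑' z, p x z * fp p n z w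
    split
    · exact le_refl 0
    · exact tsum_nonneg fun z => mul_nonneg (hp_nonneg x z) (ih z w)

include hp_nonneg hp_supp in
lemma fp_le_pn (n : ℕ) (x w : S) : fp p n x w ≤ pn p n x w := by
  induction n generalizing x w with
  | zero => exact le_refl _
  | succ n ih =>
    by_cases hxw : x = w
    · show (if x = w then 0 else _) ≤ _
      rw [if_pos hxw]
      exact pn_nonneg hp_nonneg (n+1) x w
    · rw [fp_succ_sum hp_supp n hxw, pn_succ_sum hp_supp n x w]
      exact Finset.sum_le_sum fun z _ =>
        mul_le_mul_of_nonneg_left (ih z w) (hp_nonneg x z)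

end basic


section Master

set_option maxHeartbeats 1000000 in
lemma green_master_exists
    (hconn : G.Connected) (hacyc : G.IsAcyclic)
    (hp_pos : ∀ x y, 0 < p x y ↔ G.Adj x y)
    (hp_zero : ∀ x y, ¬ G.Adj x y → p x y = 0)
    (hp_sum : ∀ x, ∑ y ∈ G.neighborFinset x, p x y = 1)
    {ε η : ℝ} (hε : 0 < ε) (hη : 0 < η) (hη2 : η < 1/2)
    (hH : ∀ x y, G.Adj x y → ε ≤ p x y ∧ p x y ≤ 1 / 2 - η) :
    ∃ M : ℝ, 1 ≤ M ∧ (∀ x y, green p x y ≤ M) ∧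
      (∀ x y, ε ^ G.dist x y ≤ green p x y) ∧
      (∀ x w y, G.dist x w + G.dist w y = G.dist x y →
        green p x y * green p w w = green p x w * green p w y) := by
  classical
  have hp_nonneg : ∀ x y, 0 ≤ p x y := by
    intro x y
    by_cases h : G.Adj x y
    · exact ((hp_pos x y).mpr h).le
    · rw [hp_zero x y h]
  have hp_supp : ∀ x z, z ∉ G.neighborFinset x → p x z = 0 := fun x z h =>
    hp_zero x z (by simpa [SimpleGraph.mem_neighborFinset] using h)
  set q : ℝ := 1/2 - η with hqdef
  have hq0 : 0 < q := by rw [hqdef]; linarith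
  have hq1 : q < 1/2 := by rw [hqdef]; linarith
  have h1q : 0 < 1 - q := by rw [hqdef]; linarith
  have hq1' : q < 1 - q := by rw [hqdef]; linarith
  set sq := Real.sqrt q with hsqdef
  set s1 := Real.sqrt (1-q) with hs1def
  have hsq : 0 < sq := Real.sqrt_pos.mpr hq0
  have hs1 : 0 < s1 := Real.sqrt_pos.mpr h1q
  have hsq2 : sq^2 = q := Real.sq_sqrt hq0.le
  have hs12 : s1^2 = 1-q := Real.sq_sqrt h1q.le
  have hsqlt : sq < s1 := Real.sqrt_lt_sqrt hq0.le hq1'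
  set μ := sq / s1 with hμdef
  have hμ0 : 0 < μ := div_pos hsq hs1
  have hμ1 : μ < 1 := (div_lt_one hs1).mpr hsqlt
  set r := 2*(sq*s1) with hrdef
  have hr0 : 0 < r := by positivity
  have hr1 : r < 1 := by nlinarith [pow_pos (sub_pos.mpr hsqlt) 2]
  have hμr : μ ≤ r := by
    rw [hμdef, div_le_iff₀ hs1]
    nlinarith [hsq.le, hs12]
  have hID : q + (1-q) * μ^2 = r * μ := by
    have h1 : (1-q) * μ^2 = q := by
      rw [hμdef, div_pow, hsq2, hs12]
      field_simp
    have h2 : r * μ = 2*q := by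
      rw [hrdef, hμdef]
      rw [← hsq2, div_eq_mul_inv, show 2*(sq*s1)*(sq*s1⁻¹) = 2*sq^2*(s1*s1⁻¹) by ring,
        mul_inv_cancel₀ hs1.ne', mul_one]
    linarith
  -- drift inequality
  have hdrift : ∀ x y : S, x ≠ y →
      ∑ z ∈ G.neighborFinset x, p x z * μ ^ (G.dist z y) ≤ r * μ ^ G.dist x y := by
    intro x y hxy
    obtain ⟨z₀, hadj, hd⟩ := exists_closer hconn hxy
    have hz₀mem : z₀ ∈ G.neighborFinset x := (SimpleGraph.mem_neighborFinset G x z₀).mpr hadj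
    set d' := G.dist z₀ y with hd'def
    have hdx : G.dist x y = d' + 1 := by omega
    have hfar : ∀ z ∈ G.neighborFinset x \ {z₀}, G.dist z y = d' + 2 := by
      intro z hz
      rw [Finset.mem_sdiff, Finset.mem_singleton] at hz
      have hadjz : G.Adj x z := (SimpleGraph.mem_neighborFinset G x z).mp hz.1
      rcases adj_dist_cases hconn hacyc hadjz y with h | h
      · exact absurd (unique_closer (y := y) hconn hacyc hadjz hadj (by omega) (by omega)) hz.2
      · omega
    have hsplit := Finset.sum_eq_sum_sdiff_singleton_add hz₀mem
      (fun z => p x z * μ ^ G.dist z y)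
    rw [hsplit]
    have hpsplit := Finset.sum_eq_sum_sdiff_singleton_add hz₀mem (fun z => p x z)
    rw [hp_sum x] at hpsplit
    have hsum2 : ∑ z ∈ G.neighborFinset x \ {z₀}, p x z * μ ^ G.dist z y
        = (1 - p x z₀) * μ ^ (d'+2) := by
      rw [Finset.sum_congr rfl (fun z hz => by rw [hfar z hz])]
      rw [← Finset.sum_mul]
      congr 1
      linarith
    rw [hsum2, hdx]
    have hp0 := hH x z₀ hadj
    have hmono : μ^(d'+2) ≤ μ^(d') := pow_le_pow_of_le_one hμ0.le hμ1.le (by omega)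
    have hqle : (1 - q) * μ^(d'+2) + q * μ^d' = r * μ^(d'+1) := by
      have e1 : μ^(d'+2) = μ^2 * μ^d' := by ring
      have e2 : μ^(d'+1) = μ * μ^d' := by ring
      rw [e1, e2]
      linear_combination (μ^d') * hID
    have hkey : (1 - p x z₀) * μ^(d'+2) + p x z₀ * μ^d'
        ≤ (1 - q) * μ^(d'+2) + q * μ^d' := by
      have hqp : (0:ℝ) ≤ q - p x z₀ := by linarith [hp0.2]
      nlinarith [mul_nonneg hqp (sub_nonneg.mpr hmono)]
    linarith
  -- exponential bound on pn
  have hPB : ∀ n (x y : S), pn p n x y ≤ r^n * μ ^ G.dist x y := by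
    intro n
    induction n with
    | zero =>
      intro x y
      by_cases hxy : x = y
      · subst hxy
        show (if x = x then (1:ℝ) else 0) ≤ _
        rw [if_pos rfl]
        simp [SimpleGraph.dist_self]
      · show (if x = y then (1:ℝ) else 0) ≤ _
        rw [if_neg hxy]
        positivity
    | succ n ih =>
      intro x y
      rw [pn_succ_sum hp_supp]
      have step1 : ∑ z ∈ G.neighborFinset x, p x z * pn p n z y
          ≤ ∑ z ∈ G.neighborFinset x, p x z * (r^n * μ ^ G.dist z y) :=
        Finset.sum_le_sum fun z _ => mul_le_mul_of_nonneg_left (ih z y) (hp_nonneg x z)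
      have step2 : ∑ z ∈ G.neighborFinset x, p x z * (r^n * μ ^ G.dist z y)
          = r^n * ∑ z ∈ G.neighborFinset x, p x z * μ ^ G.dist z y := by
        rw [Finset.mul_sum]
        exact Finset.sum_congr rfl fun z _ => by ring
      by_cases hxy : x = y
      · subst hxy
        have hone : ∀ z ∈ G.neighborFinset x, p x z * μ ^ G.dist z x = p x z * μ := by
          intro z hz
          have hadj : G.Adj x z := (SimpleGraph.mem_neighborFinset G x z).mp hz
          rw [show G.dist z x = 1 from SimpleGraph.dist_eq_one_iff_adj.mpr hadj.symm, pow_one]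
        have step3 : ∑ z ∈ G.neighborFinset x, p x z * μ ^ G.dist z x = μ := by
          rw [Finset.sum_congr rfl hone, ← Finset.sum_mul, hp_sum x, one_mul]
        calc ∑ z ∈ G.neighborFinset x, p x z * pn p n z x
            ≤ r^n * ∑ z ∈ G.neighborFinset x, p x z * μ ^ G.dist z x := by
              rw [← step2]; exact step1
          _ = r^n * μ := by rw [step3]
          _ ≤ r^(n+1) * μ ^ G.dist x x := by
              rw [SimpleGraph.dist_self, pow_zero, mul_one, pow_succ]
              exact mul_le_mul_of_nonneg_left hμr (pow_nonneg hr0.le n)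
      · calc ∑ z ∈ G.neighborFinset x, p x z * pn p n z y
            ≤ r^n * ∑ z ∈ G.neighborFinset x, p x z * μ ^ G.dist z y := by
              rw [← step2]; exact step1
          _ ≤ r^n * (r * μ ^ G.dist x y) :=
              mul_le_mul_of_nonneg_left (hdrift x y hxy) (pow_nonneg hr0.le n)
          _ = r^(n+1) * μ ^ G.dist x y := by ring
  have hpnr : ∀ n (x y : S), pn p n x y ≤ r^n := by
    intro n x y
    refine (hPB n x y).trans ?_
    have h1 : μ ^ G.dist x y ≤ 1 := pow_le_one₀ hμ0.le hμ1.le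
    nlinarith [pow_nonneg hr0.le n]
  have hsumm : ∀ x y : S, Summable (fun n => pn p n x y) := fun x y =>
    Summable.of_nonneg_of_le (fun n => pn_nonneg hp_nonneg n x y) (fun n => hpnr n x y)
      (summable_geometric_of_lt_one hr0.le hr1)
  set M := (1-r)⁻¹ with hMdef
  have h1r : 0 < 1 - r := by linarith
  have hM0 : 0 < M := inv_pos.mpr h1r
  have hMval : M * (1-r) = 1 := inv_mul_cancel₀ (ne_of_gt h1r)
  have hM1 : 1 ≤ M := by nlinarith [mul_nonneg hM0.le hr0.le]
  have hgle : ∀ x y : S, green p x y ≤ M := by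
    intro x y
    have h := Summable.tsum_le_tsum (fun n => hpnr n x y) (hsumm x y)
      (summable_geometric_of_lt_one hr0.le hr1)
    rwa [tsum_geometric_of_lt_one hr0.le hr1] at h
  -- lower bound
  have hclose : ∀ d (x y : S), G.dist x y = d → ε ^ d ≤ pn p d x y := by
    intro d
    induction d with
    | zero =>
      intro x y h0
      have hxy : x = y := hconn.dist_eq_zero_iff.mp h0
      subst hxy
      show ε ^ 0 ≤ if x = x then (1:ℝ) else 0
      rw [if_pos rfl, pow_zero]
    | succ d ih =>
      intro x y hd
      have hxy : x ≠ y := by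
        intro h
        subst h
        rw [SimpleGraph.dist_self] at hd
        omega
      obtain ⟨z₀, hadj, hdz⟩ := exists_closer hconn hxy
      have hmem : z₀ ∈ G.neighborFinset x := (SimpleGraph.mem_neighborFinset G x z₀).mpr hadj
      rw [pn_succ_sum hp_supp]
      have hterm : ε^(d+1) ≤ p x z₀ * pn p d z₀ y := by
        have h1 := ih z₀ y (by omega)
        have h2 := (hH x z₀ hadj).1
        calc ε^(d+1) = ε * ε^d := by ring
          _ ≤ p x z₀ * pn p d z₀ y :=
            mul_le_mul h2 h1 (pow_nonneg hε.le d) ((hp_nonneg x z₀).trans (le_refl _))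
      exact hterm.trans (Finset.single_le_sum
        (fun z _ => mul_nonneg (hp_nonneg x z) (pn_nonneg hp_nonneg d z y)) hmem)
  have hglow : ∀ x y : S, ε ^ G.dist x y ≤ green p x y := fun x y =>
    (hclose _ x y rfl).trans (Summable.le_tsum (hsumm x y) (G.dist x y)
      (fun j _ => pn_nonneg hp_nonneg j x y))
  -- first passage decomposition
  have hdec : ∀ (w y : S) (n : ℕ), ∀ x : S, G.dist x w + G.dist w y = G.dist x y →
      pn p n x y = ∑ m ∈ Finset.range (n+1), fp p m x w * pn p (n-m) w y := by
    intro w y n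
    induction n with
    | zero =>
      intro x hbtw
      by_cases hxw : x = w
      · subst hxw
        rw [Finset.sum_range_one]
        have h1 : fp p 0 x x = 1 := by
          show (if x = x then (1:ℝ) else 0) = 1
          rw [if_pos rfl]
        rw [h1, one_mul]
      · have hxy : x ≠ y := by
          intro h
          subst h
          rw [SimpleGraph.dist_self] at hbtw
          exact hxw (hconn.dist_eq_zero_iff.mp (by omega))
        rw [Finset.sum_range_one]
        have h1 : fp p 0 x w = 0 := by
          show (if x = w then (1:ℝ) else 0) = 0
          rw [if_neg hxw]
        rw [h1, zero_mul]
        show (if x = y then (1:ℝ) else 0) = 0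
        rw [if_neg hxy]
    | succ n ih =>
      intro x hbtw
      by_cases hxw : x = w
      · subst hxw
        have h₀ : ∀ m ∈ Finset.range (n+1+1), m ≠ 0 →
            fp p m x x * pn p (n+1-m) x y = 0 := by
          intro m hm hne
          match m with
          | 0 => exact absurd rfl hne
          | m+1 =>
            have h0 : fp p (m+1) x x = 0 := by
              show (if x = x then (0:ℝ) else _) = 0
              rw [if_pos rfl]
            rw [h0, zero_mul]
        rw [Finset.sum_eq_single_of_mem 0 (Finset.mem_range.mpr (by omega)) h₀]
        have h1 : fp p 0 x x = 1 := by
          show (if x = x then (1:ℝ) else 0) = 1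
          rw [if_pos rfl]
        rw [h1, one_mul]
        norm_num
      · rw [pn_succ_sum hp_supp]
        have hstepz : ∀ z ∈ G.neighborFinset x,
            pn p n z y = ∑ m ∈ Finset.range (n+1), fp p m z w * pn p (n-m) w y :=
          fun z hz => ih z (btw_step hconn hacyc hbtw hxw
            ((SimpleGraph.mem_neighborFinset G x z).mp hz))
        calc ∑ z ∈ G.neighborFinset x, p x z * pn p n z y
            = ∑ z ∈ G.neighborFinset x, ∑ m ∈ Finset.range (n+1),
                p x z * (fp p m z w * pn p (n-m) w y) := by
              refine Finset.sum_congr rfl fun z hz => ?_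
              rw [hstepz z hz, Finset.mul_sum]
          _ = ∑ m ∈ Finset.range (n+1), ∑ z ∈ G.neighborFinset x,
                p x z * (fp p m z w * pn p (n-m) w y) := Finset.sum_comm
          _ = ∑ m ∈ Finset.range (n+1), fp p (m+1) x w * pn p (n-m) w y := by
              refine Finset.sum_congr rfl fun m hm => ?_
              rw [fp_succ_sum hp_supp m hxw, Finset.sum_mul]
              exact Finset.sum_congr rfl fun z hz => by ring
          _ = ∑ m ∈ Finset.range (n+1+1), fp p m x w * pn p (n+1-m) w y := by
              rw [Finset.sum_range_succ' (fun m => fp p m x w * pn p (n+1-m) w y) (n+1)]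
              beta_reduce
              have h0 : fp p 0 x w = 0 := by
                show (if x = w then (1:ℝ) else 0) = 0
                rw [if_neg hxw]
              rw [h0, zero_mul, add_zero]
              refine Finset.sum_congr rfl fun m hm => ?_
              have he : n + 1 - (m+1) = n - m := by omega
              rw [he]
  -- summability of fp
  have hfpsumm : ∀ x w : S, Summable fun m => fp p m x w := fun x w =>
    Summable.of_nonneg_of_le (fun m => fp_nonneg hp_nonneg m x w)
      (fun m => (fp_le_pn hp_nonneg hp_supp m x w).trans (hpnr m x w))
      (summable_geometric_of_lt_one hr0.le hr1)
  -- Green factorization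
  have hGF : ∀ x w y : S, G.dist x w + G.dist w y = G.dist x y →
      green p x y = (∑' m, fp p m x w) * green p w y := by
    intro x w y hbtw
    have hf : Summable fun m => ‖fp p m x w‖ :=
      (hfpsumm x w).congr fun m => (Real.norm_of_nonneg (fp_nonneg hp_nonneg m x w)).symm
    have hg : Summable fun n => ‖pn p n w y‖ :=
      (hsumm w y).congr fun n => (Real.norm_of_nonneg (pn_nonneg hp_nonneg n w y)).symm
    calc green p x y = ∑' n, ∑ m ∈ Finset.range (n+1), fp p m x w * pn p (n-m) w y :=
          tsum_congr (fun n => hdec w y n x hbtw)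
      _ = (∑' m, fp p m x w) * ∑' n, pn p n w y :=
          (tsum_mul_tsum_eq_tsum_sum_range_of_summable_norm hf hg).symm
      _ = (∑' m, fp p m x w) * green p w y := rfl
  have hmaster : ∀ x w y : S, G.dist x w + G.dist w y = G.dist x y →
      green p x y * green p w w = green p x w * green p w y := by
    intro x w y hbtw
    have h1 := hGF x w y hbtw
    have h2 := hGF x w w (by rw [SimpleGraph.dist_self, Nat.add_zero])
    rw [h1, h2]
    ring
  exact ⟨M, hM1, hgle, hglow, hmaster⟩

end Master

end TreeGreen

open TreeGreen in
set_option maxHeartbeats 1600000 in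
/-- Under hypothesis (H), given a geodesic ray `γ` from `o`
(with projection `π(x) = γ (k x)`) and `c ∈ ℕ`, there is a constant `β` such
that for all `z` and all `y` with `d(y,π(y)) ≤ c`,
`G(z,y) ≤ β ⬝ G(o,y) ⬝ K(z)`, where `K(z) = G(z,π(z))/G(o,π(z))`. -/
theorem green_le_const_mul_kernel
    {S : Type*} [Countable S] (G : SimpleGraph S)
    [∀ x : S, Fintype (G.neighborSet x)]
    (hconn : G.Connected) (hacyc : G.IsAcyclic)
    (p : S → S → ℝ)
    (hp_pos : ∀ x y, 0 < p x y ↔ G.Adj x y)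
    (hp_zero : ∀ x y, ¬ G.Adj x y → p x y = 0)
    (hp_sum : ∀ x, ∑ y ∈ G.neighborFinset x, p x y = 1)
    (ε η : ℝ) (hε : 0 < ε) (hη : 0 < η)
    (hH : ∀ x y, G.Adj x y → ε ≤ p x y ∧ p x y ≤ 1 / 2 - η)
    (o : S) (γ : ℕ → S) (hγ0 : γ 0 = o)
    (hγ : ∀ m n : ℕ, (G.dist (γ m) (γ n) : ℤ) = |(m : ℤ) - (n : ℤ)|)
    (k : S → ℕ)
    (hk_min : ∀ (x : S) (n : ℕ), G.dist x (γ (k x)) ≤ G.dist x (γ n))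
    (hk_uniq : ∀ (x : S) (n : ℕ), G.dist x (γ n) ≤ G.dist x (γ (k x)) → n = k x)
    (K : S → ℝ) (hK : ∀ x, K x = green p x (γ (k x)) / green p o (γ (k x)))
    (c : ℕ) :
    ∃ β : ℝ, ∀ z y : S, G.dist y (γ (k y)) ≤ c →
      green p z y ≤ β * green p o y * K z := by
  classical
  have hadj01 : G.Adj (γ 0) (γ 1) := gamma_adj hγ 0
  have hη2 : η < 1/2 := by
    have h1 := (hH _ _ hadj01).1
    have h2 := (hH _ _ hadj01).2
    linarith
  have hε1 : ε < 1 := by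
    have h1 := (hH _ _ hadj01).1
    have h2 := (hH _ _ hadj01).2
    linarith
  obtain ⟨M, hM1, hMle, hlow, hmaster⟩ :=
    green_master_exists hconn hacyc hp_pos hp_zero hp_sum hε hη hη2 hH
  have hM0 : (0:ℝ) ≤ M := by linarith
  have hpos : ∀ x y : S, 0 < green p x y := fun x y =>
    lt_of_lt_of_le (pow_pos hε _) (hlow x y)
  have hone : ∀ x : S, 1 ≤ green p x x := fun x => by
    have h := hlow x x
    rwa [SimpleGraph.dist_self, pow_zero] at h
  have hup : ∀ a b e : S, G.dist a b + G.dist b e = G.dist a e →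
      green p a e ≤ green p a b * green p b e := by
    intro a b e hbtw
    have hm := hmaster a b e hbtw
    nlinarith [(hpos a e).le, hone b]
  have hlowfac : ∀ a b e : S, G.dist a b + G.dist b e = G.dist a e →
      green p a b * green p b e ≤ M * green p a e := by
    intro a b e hbtw
    have hm := hmaster a b e hbtw
    nlinarith [(hpos a e).le, hMle b b]
  have hεc : (0:ℝ) < ε^c := pow_pos hε c
  have hεc1 : (ε:ℝ)^c ≤ 1 := pow_le_one₀ hε.le hε1.le
  refine ⟨M^3 / ε^(2*c), ?_⟩
  intro z y hy
  obtain ⟨i, hidef⟩ : ∃ i', k y = i' := ⟨_, rfl⟩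
  obtain ⟨j, hjdef⟩ : ∃ j', k z = j' := ⟨_, rfl⟩
  rw [hidef] at hy
  -- basic distances
  have hoy : G.dist o y = i + G.dist y (γ i) := by
    have h := proj_dist_down hconn hacyc hγ (fun n => hk_min y n) (k y) (le_refl _)
    rw [Nat.sub_self, hγ0, hidef] at h
    have hcomm : G.dist y o = G.dist o y := SimpleGraph.dist_comm
    omega
  have hoz : G.dist o z = j + G.dist z (γ j) := by
    have h := proj_dist_down hconn hacyc hγ (fun n => hk_min z n) (k z) (le_refl _)
    rw [Nat.sub_self, hγ0, hjdef] at h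
    have hcomm : G.dist z o = G.dist o z := SimpleGraph.dist_comm
    omega
  have hov : G.dist o (γ j) = j := by
    have h := gamma_dist hγ (Nat.zero_le j)
    rw [hγ0] at h
    omega
  have how : G.dist o (γ i) = i := by
    have h := gamma_dist hγ (Nat.zero_le i)
    rw [hγ0] at h
    omega
  obtain ⟨m, h_mzy, h_mzo, h_myo⟩ := median hconn hacyc z y o
  obtain ⟨t, ht⟩ : ∃ t', G.dist o m = t' := ⟨_, rfl⟩
  -- commutativity helpers
  have cmo : G.dist m o = G.dist o m := SimpleGraph.dist_comm
  have cmz : G.dist m z = G.dist z m := SimpleGraph.dist_comm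
  have cmy : G.dist m y = G.dist y m := SimpleGraph.dist_comm
  have czo : G.dist z o = G.dist o z := SimpleGraph.dist_comm
  have cyo : G.dist y o = G.dist o y := SimpleGraph.dist_comm
  have cvz : G.dist (γ j) z = G.dist z (γ j) := SimpleGraph.dist_comm
  have cwy : G.dist (γ i) y = G.dist y (γ i) := SimpleGraph.dist_comm
  have cvm : G.dist (γ j) m = G.dist m (γ j) := SimpleGraph.dist_comm
  have cwm : G.dist (γ i) m = G.dist m (γ i) := SimpleGraph.dist_comm
  -- betweenness facts
  have btw_m_oz : G.dist o m + G.dist m z = G.dist o z := by omega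
  have btw_m_oy : G.dist o m + G.dist m y = G.dist o y := by omega
  have btw_v_oz : G.dist o (γ j) + G.dist (γ j) z = G.dist o z := by omega
  have btw_w_oy : G.dist o (γ i) + G.dist (γ i) y = G.dist o y := by omega
  have key : (ε^c * ε^c) * (green p z y * green p o (γ j))
      ≤ M^3 * (green p o y * green p z (γ j)) := by
    by_cases hcase : G.dist o m ≤ j
    · -- case (a)
      have hmv := between_ord hconn hacyc btw_m_oz btw_v_oz (by omega)
      -- hmv : dist m (γ j) + dist o m = dist o (γ j)
      have btw_m_ov : G.dist o m + G.dist m (γ j) = G.dist o (γ j) := by omega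
      have btw_v_zm : G.dist z (γ j) + G.dist (γ j) m = G.dist z m := by omega
      have g1 := hup z m y h_mzy
      have g2 := hup o m (γ j) btw_m_ov
      have g3 := hlowfac o m y btw_m_oy
      have g4 := hup z (γ j) m btw_v_zm
      have g5 := hMle (γ j) m
      have g6 := hMle m (γ j)
      have main : green p z y * green p o (γ j)
          ≤ M^3 * (green p o y * green p z (γ j)) := by
        calc green p z y * green p o (γ j)
            ≤ (green p z m * green p m y) * (green p o m * green p m (γ j)) :=
              mul_le_mul g1 g2 (hpos o (γ j)).le
                (mul_nonneg (hpos z m).le (hpos m y).le)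
          _ = (green p z m * green p m (γ j)) * (green p o m * green p m y) := by
              ring
          _ ≤ ((green p z (γ j) * green p (γ j) m) * green p m (γ j)) *
                (M * green p o y) := by
              refine mul_le_mul ?_ g3
                (mul_nonneg (hpos o m).le (hpos m y).le) ?_
              · exact mul_le_mul_of_nonneg_right g4 (hpos m (γ j)).le
              · exact mul_nonneg
                  (mul_nonneg (hpos z (γ j)).le (hpos (γ j) m).le)
                  (hpos m (γ j)).le
          _ ≤ ((green p z (γ j) * M) * M) * (M * green p o y) := by
              refine mul_le_mul_of_nonneg_right ?_
                (mul_nonneg hM0 (hpos o y).le)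
              exact mul_le_mul
                (mul_le_mul_of_nonneg_left g5 (hpos z (γ j)).le) g6
                (hpos m (γ j)).le (mul_nonneg (hpos z (γ j)).le hM0)
          _ = M^3 * (green p o y * green p z (γ j)) := by ring
      have hec : (ε:ℝ)^c * ε^c ≤ 1 := by nlinarith
      calc (ε^c * ε^c) * (green p z y * green p o (γ j))
          ≤ 1 * (green p z y * green p o (γ j)) :=
            mul_le_mul_of_nonneg_right hec
              (mul_nonneg (hpos z y).le (hpos o (γ j)).le)
        _ = green p z y * green p o (γ j) := one_mul _
        _ ≤ M^3 * (green p o y * green p z (γ j)) := main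
    · -- case (b) : j < t
      push_neg at hcase
      by_cases hti : G.dist o m ≤ i
      · -- impossible subcase
        exfalso
        have hγt_o : G.dist o (γ t) = t := by
          have h := gamma_dist hγ (Nat.zero_le t)
          rw [hγ0] at h
          omega
        have hγt_y : G.dist y (γ t) = G.dist y (γ i) + (i - G.dist o m) := by
          have h := proj_dist_down hconn hacyc hγ (fun n => hk_min y n) (i - G.dist o m)
            (by omega)
          rw [hidef, show i - (i - G.dist o m) = t by omega] at h
          exact h
        have cty : G.dist (γ t) y = G.dist y (γ t) := SimpleGraph.dist_comm
        have btw_γt_oy : G.dist o (γ t) + G.dist (γ t) y = G.dist o y := by omega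
        have hmm := between_ord hconn hacyc btw_m_oy btw_γt_oy (by omega)
        have hmeq : m = γ t := by
          have h0 : G.dist m (γ t) = 0 := by omega
          exact hconn.dist_eq_zero_iff.mp h0
        have hzt : G.dist z (γ t) = G.dist z (γ j) + (G.dist o m - j) := by
          have h := proj_dist_up hconn hacyc hγ (fun n => hk_min z n) (G.dist o m - j)
          rw [hjdef, show j + (G.dist o m - j) = t by omega] at h
          exact h
        have hzm : G.dist z m = G.dist z (γ t) := by rw [hmeq]
        omega
      · -- main subcase : i < G.dist o m
        push_neg at hti
        have hwm := between_ord hconn hacyc btw_w_oy btw_m_oy (by omega)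
        have hvm := between_ord hconn hacyc btw_v_oz btw_m_oz (by omega)
        -- hvm : dist (γ j) m + dist o (γ j) = dist o m
        have hty : G.dist o m ≤ i + G.dist y (γ i) := by omega
        have hji : j ≤ i := by
          by_contra hc
          push_neg at hc
          have tvy : G.dist (γ j) y ≤ G.dist (γ j) m + G.dist m y :=
            hconn.dist_triangle
          have toy : G.dist o y ≤ G.dist o (γ j) + G.dist (γ j) y :=
            hconn.dist_triangle
          have hyj : G.dist y (γ j) = G.dist y (γ i) + (j - i) := by
            have h := proj_dist_up hconn hacyc hγ (fun n => hk_min y n) (j - i)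
            rw [hidef, show i + (j - i) = j by omega] at h
            exact h
          have cvy : G.dist (γ j) y = G.dist y (γ j) := SimpleGraph.dist_comm
          omega
        have htz : G.dist z (γ i) ≤ G.dist z (γ j) := by
          have tzw : G.dist z (γ i) ≤ G.dist z m + G.dist m (γ i) :=
            hconn.dist_triangle
          omega
        have hij : i = j := by
          have h := hk_uniq z i (by rw [hjdef]; exact htz)
          rw [hjdef] at h
          exact h
        subst hij
        -- now γ j is γ i; all facts with γ i
        have btw_v_om : G.dist o (γ i) + G.dist (γ i) m = G.dist o m := by omega
        have btw_m_zv : G.dist z m + G.dist m (γ i) = G.dist z (γ i) := by omega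
        have hdwm : G.dist (γ i) m ≤ c := by omega
        have hdmw : G.dist m (γ i) ≤ c := by omega
        have b1 := hup z m y h_mzy
        have b2 := hlowfac o (γ i) m btw_v_om
        have b3 := hlowfac o m y btw_m_oy
        have b4 := hlowfac z m (γ i) btw_m_zv
        have b5 : (ε:ℝ)^c ≤ green p (γ i) m := by
          refine le_trans ?_ (hlow (γ i) m)
          exact pow_le_pow_of_le_one hε.le hε1.le hdwm
        have b6 : (ε:ℝ)^c ≤ green p m (γ i) := by
          refine le_trans ?_ (hlow m (γ i))
          exact pow_le_pow_of_le_one hε.le hε1.le hdmw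
        calc (ε^c * ε^c) * (green p z y * green p o (γ i))
            ≤ (ε^c * ε^c) * ((green p z m * green p m y) * green p o (γ i)) := by
              refine mul_le_mul_of_nonneg_left ?_ (mul_nonneg hεc.le hεc.le)
              exact mul_le_mul_of_nonneg_right b1 (hpos o (γ i)).le
          _ = (ε^c * green p z m) * (green p m y * (ε^c * green p o (γ i))) := by
              ring
          _ ≤ (green p m (γ i) * green p z m) *
                (green p m y * (green p (γ i) m * green p o (γ i))) := by
              refine mul_le_mul
                (mul_le_mul_of_nonneg_right b6 (hpos z m).le)
                (mul_le_mul_of_nonneg_left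
                  (mul_le_mul_of_nonneg_right b5 (hpos o (γ i)).le)
                  (hpos m y).le)
                ?_ ?_
              · exact mul_nonneg (hpos m y).le
                  (mul_nonneg hεc.le (hpos o (γ i)).le)
              · exact mul_nonneg (hpos m (γ i)).le (hpos z m).le
          _ = (green p z m * green p m (γ i)) *
                (green p m y * (green p o (γ i) * green p (γ i) m)) := by ring
          _ ≤ (M * green p z (γ i)) * (green p m y * (M * green p o m)) := by
              refine mul_le_mul b4
                (mul_le_mul_of_nonneg_left b2 (hpos m y).le) ?_ ?_
              · exact mul_nonneg (hpos m y).le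
                  (mul_nonneg (hpos o (γ i)).le (hpos (γ i) m).le)
              · exact mul_nonneg hM0 (hpos z (γ i)).le
          _ = (green p o m * green p m y) * (M * (M * green p z (γ i))) := by ring
          _ ≤ (M * green p o y) * (M * (M * green p z (γ i))) := by
              refine mul_le_mul_of_nonneg_right b3 ?_
              exact mul_nonneg hM0 (mul_nonneg hM0 (hpos z (γ i)).le)
          _ = M^3 * (green p o y * green p z (γ i)) := by ring
  -- conclude
  rw [hK z, hjdef]
  have hden : 0 < green p o (γ j) := hpos o (γ j)
  rw [show M^3 / ε^(2*c) * green p o y * (green p z (γ j) / green p o (γ j))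
      = (M^3 * (green p o y * green p z (γ j))) / (ε^(2*c) * green p o (γ j)) by
    field_simp]
  rw [le_div_iff₀ (mul_pos (pow_pos hε _) hden)]
  have h2c : (ε:ℝ)^(2*c) = ε^c * ε^c := by rw [two_mul, pow_add]
  rw [h2c]
  linarith [key]


end
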